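/- arXiv:cs/0602091 — 2 statements merged into one kernel-verified Lean document; each statement's English description precedes it below -/
import Mathlib

section
/- Let K_Z be an n×n symmetric positive definite real matrix and P > 0. Let K_X be an n×n symmetric positive semidefinite matrix with tr K_X ≤ nP, and set K_Y = K_X + K_Z. Then K_X attains the maximum of log det(K' + K_Z) over all symmetric positive semidefinite K' with tr K' ≤ nP if and only if both of the following hold: (i) Power: tr K_X = nP; and (ii) Water-filling: tr(K_X (K_Y - λ_min(K_Y) I)) = 0, where λ_min(K_Y) is the smallest eigenvalue of K_Y. -/
open MeasureTheory Real Filter Matrix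

noncomputable section

/-- The smallest eigenvalue of a (symmetric) real matrix. -/
def lambdaMin {n : ℕ} (M : Matrix (Fin n) (Fin n) ℝ) : ℝ :=
  sInf {t : ℝ | ∃ v : Fin n → ℝ, v ≠ 0 ∧ M.mulVec v = t • v}

section helpers

open Matrix

variable {n : ℕ} {A B S : Matrix (Fin n) (Fin n) ℝ}

private lemma trace_mul_conjTranspose_self_nonneg' (M : Matrix (Fin n) (Fin n) ℝ) :
    0 ≤ (M * Mᴴ).trace := by
  rw [Matrix.trace]
  refine Finset.sum_nonneg fun i _ => ?_
  simp only [Matrix.diag_apply, Matrix.mul_apply, Matrix.conjTranspose_apply, star_trivial]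
  exact Finset.sum_nonneg fun j _ => mul_self_nonneg _

private lemma eq_zero_of_trace_mul_conjTranspose_self' (M : Matrix (Fin n) (Fin n) ℝ)
    (h : (M * Mᴴ).trace = 0) : M = 0 := by
  ext i j
  have h' : ∀ i ∈ Finset.univ, (0:ℝ) ≤ (M * Mᴴ).diag i := by
    intro i _
    simp only [Matrix.diag_apply, Matrix.mul_apply, Matrix.conjTranspose_apply, star_trivial]
    exact Finset.sum_nonneg fun j _ => mul_self_nonneg _
  have hz := (Finset.sum_eq_zero_iff_of_nonneg h').mp h i (Finset.mem_univ i)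
  simp only [Matrix.diag_apply, Matrix.mul_apply, Matrix.conjTranspose_apply, star_trivial] at hz
  have hz' := (Finset.sum_eq_zero_iff_of_nonneg
    (fun j _ => mul_self_nonneg (M i j))).mp hz j (Finset.mem_univ j)
  simpa [mul_self_eq_zero] using hz'

private lemma psd_sqrt_decomp' {A : Matrix (Fin n) (Fin n) ℝ} (hA : A.PosSemidef) :
    ∃ a : Matrix (Fin n) (Fin n) ℝ, aᴴ = a ∧ a * a = A :=
  by
    open scoped MatrixOrder in
    exact ⟨CFC.sqrt A, (CFC.sqrt_nonneg A).posSemidef.isHermitian.eq,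
      CFC.sqrt_mul_sqrt_self A hA.nonneg⟩

private lemma psd_trace_decomp' {A B : Matrix (Fin n) (Fin n) ℝ}
    (hA : A.PosSemidef) (hB : B.PosSemidef) :
    ∃ a b : Matrix (Fin n) (Fin n) ℝ, a * a = A ∧ b * b = B ∧
      (A * B).trace = ((a * b) * (a * b)ᴴ).trace := by
  obtain ⟨a, hat, haa⟩ := psd_sqrt_decomp' hA
  obtain ⟨b, hbt, hbb⟩ := psd_sqrt_decomp' hB
  refine ⟨a, b, haa, hbb, ?_⟩
  rw [Matrix.conjTranspose_mul, hat, hbt, ← haa, ← hbb]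
  rw [show a * a * (b * b) = a * (a * b * b) by noncomm_ring, Matrix.trace_mul_comm]
  congr 1; noncomm_ring

private lemma psd_trace_mul_nonneg' {A B : Matrix (Fin n) (Fin n) ℝ}
    (hA : A.PosSemidef) (hB : B.PosSemidef) : 0 ≤ (A * B).trace := by
  obtain ⟨a, b, -, -, htr⟩ := psd_trace_decomp' hA hB
  rw [htr]
  exact trace_mul_conjTranspose_self_nonneg' _

private lemma psd_mul_eq_zero_of_trace' {A B : Matrix (Fin n) (Fin n) ℝ}
    (hA : A.PosSemidef) (hB : B.PosSemidef) (h : (A * B).trace = 0) : A * B = 0 := by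
  obtain ⟨a, b, haa, hbb, htr⟩ := psd_trace_decomp' hA hB
  rw [htr] at h
  have h0 : a * b = 0 := eq_zero_of_trace_mul_conjTranspose_self' _ h
  calc A * B = a * (a * b) * b := by rw [← haa, ← hbb]; noncomm_ring
    _ = 0 := by rw [h0, Matrix.mul_zero, Matrix.zero_mul]

private lemma conj_smul_add_smul_one' (hA : A.IsHermitian) (c d : ℝ) :
    c • A + d • (1 : Matrix (Fin n) (Fin n) ℝ)
      = (hA.eigenvectorUnitary : Matrix (Fin n) (Fin n) ℝ)
        * diagonal (fun i => c * hA.eigenvalues i + d)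
        * (star hA.eigenvectorUnitary : Matrix (Fin n) (Fin n) ℝ) := by
  have h := hA.spectral_theorem
  have h2 : (RCLike.ofReal ∘ hA.eigenvalues : Fin n → ℝ) = hA.eigenvalues := by
    funext i; simp
  rw [h2] at h
  rw [Unitary.conjStarAlgAut_apply] at h
  have hU : (hA.eigenvectorUnitary : Matrix (Fin n) (Fin n) ℝ)
      * (star hA.eigenvectorUnitary : Matrix (Fin n) (Fin n) ℝ) = 1 :=
    (Matrix.mem_unitaryGroup_iff).mp hA.eigenvectorUnitary.2
  have hd : (diagonal (fun i => c * hA.eigenvalues i + d) : Matrix (Fin n) (Fin n) ℝ)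
      = c • diagonal hA.eigenvalues + d • 1 := by
    ext i j
    rcases eq_or_ne i j with rfl | hij
    · simp [Matrix.diagonal_apply_eq, Matrix.one_apply_eq]
    · simp [Matrix.diagonal_apply_ne _ hij, Matrix.one_apply_ne hij]
  rw [hd, Matrix.mul_add, Matrix.add_mul, Matrix.mul_smul, Matrix.smul_mul,
    Matrix.mul_smul, Matrix.smul_mul, ← h, Matrix.mul_one, hU]

private lemma det_conj_unitary' (U : Matrix.unitaryGroup (Fin n) ℝ) (X : Matrix (Fin n) (Fin n) ℝ) :
    ((U : Matrix (Fin n) (Fin n) ℝ) * X * (star U : Matrix (Fin n) (Fin n) ℝ)).det = X.det := by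
  have hU : (star U : Matrix (Fin n) (Fin n) ℝ) * (U : Matrix (Fin n) (Fin n) ℝ) = 1 :=
    (Matrix.mem_unitaryGroup_iff').mp U.2
  rw [Matrix.det_mul, Matrix.det_mul, mul_comm, ← mul_assoc, ← Matrix.det_mul, hU]
  simp

private lemma trace_smul_add_smul_one' (hA : A.IsHermitian) (c d : ℝ) :
    (c • A + d • (1 : Matrix (Fin n) (Fin n) ℝ)).trace
      = ∑ i, (c * hA.eigenvalues i + d) := by
  rw [conj_smul_add_smul_one' hA c d, Matrix.trace_mul_cycle]
  have hU : (star hA.eigenvectorUnitary : Matrix (Fin n) (Fin n) ℝ)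
      * (hA.eigenvectorUnitary : Matrix (Fin n) (Fin n) ℝ) = 1 :=
    (Matrix.mem_unitaryGroup_iff').mp hA.eigenvectorUnitary.2
  rw [hU, Matrix.one_mul, Matrix.trace_diagonal]

private lemma det_smul_add_smul_one' (hA : A.IsHermitian) (c d : ℝ) :
    (c • A + d • (1 : Matrix (Fin n) (Fin n) ℝ)).det
      = ∏ i, (c * hA.eigenvalues i + d) := by
  rw [conj_smul_add_smul_one' hA c d, det_conj_unitary', Matrix.det_diagonal]

private lemma psd_smul_add_smul_one' (hA : A.IsHermitian) (c d : ℝ)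
    (h : ∀ i, 0 ≤ c * hA.eigenvalues i + d) :
    (c • A + d • (1 : Matrix (Fin n) (Fin n) ℝ)).PosSemidef := by
  rw [conj_smul_add_smul_one' hA c d]
  have hdiag : (diagonal (fun i => c * hA.eigenvalues i + d)
      : Matrix (Fin n) (Fin n) ℝ).PosSemidef := Matrix.PosSemidef.diagonal h
  have := hdiag.mul_mul_conjTranspose_same
    (hA.eigenvectorUnitary : Matrix (Fin n) (Fin n) ℝ)
  rwa [← Matrix.star_eq_conjTranspose] at this

private lemma sub_smul_one_psd' (hA : A.IsHermitian) {μ : ℝ}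
    (h : ∀ i, μ ≤ hA.eigenvalues i) :
    (A - μ • (1 : Matrix (Fin n) (Fin n) ℝ)).PosSemidef := by
  have := psd_smul_add_smul_one' hA 1 (-μ) (fun i => by have := h i; simp; linarith)
  simpa [sub_eq_add_neg, neg_smul] using this

private lemma psd_smul' {c : ℝ} (hc : 0 ≤ c) (hA : A.PosSemidef) :
    (c • A).PosSemidef := by
  refine Matrix.PosSemidef.of_dotProduct_mulVec_nonneg ?_ ?_
  · show (c • A)ᴴ = c • A
    rw [Matrix.conjTranspose_smul, star_trivial, hA.isHermitian.eq]
  · intro x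
    rw [Matrix.smul_mulVec, dotProduct_smul]
    exact smul_nonneg hc (hA.dotProduct_mulVec_nonneg x)

private lemma lambdaMin_spec' (hM : A.PosDef) (hn : 0 < n) :
    ∃ u : Fin n → ℝ, u ⬝ᵥ u = 1 ∧ A *ᵥ u = lambdaMin A • u ∧ 0 < lambdaMin A ∧
      (A - lambdaMin A • (1 : Matrix (Fin n) (Fin n) ℝ)).PosSemidef := by
  haveI : NeZero n := ⟨hn.ne'⟩
  obtain ⟨i₀, -, hmin⟩ := Finset.exists_min_image Finset.univ hM.isHermitian.eigenvalues
    ⟨⟨0, hn⟩, Finset.mem_univ _⟩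
  set μ := hM.isHermitian.eigenvalues i₀ with hμ
  set v₀ : Fin n → ℝ := ⇑(hM.isHermitian.eigenvectorBasis i₀) with hv₀def
  have hv₀ : A *ᵥ v₀ = μ • v₀ := hM.isHermitian.mulVec_eigenvectorBasis i₀
  have hv₀ne : v₀ ≠ 0 := by
    have := hM.isHermitian.eigenvectorBasis.orthonormal.ne_zero i₀
    intro h
    apply this
    ext j
    exact congr_fun h j
  have hdot : v₀ ⬝ᵥ v₀ = 1 := by
    have h1 := hM.isHermitian.eigenvectorBasis.orthonormal.1 i₀
    rw [EuclideanSpace.norm_eq] at h1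
    have h2 : ∑ j, ‖v₀ j‖ ^ 2 = 1 := by
      have := Real.sqrt_eq_one.mp h1
      simpa using this
    rw [dotProduct]
    calc ∑ j, v₀ j * v₀ j = ∑ j, ‖v₀ j‖ ^ 2 := by
          refine Finset.sum_congr rfl fun j _ => ?_
          rw [Real.norm_eq_abs, sq_abs, sq]
      _ = 1 := h2
  have hpsd : (A - μ • (1 : Matrix (Fin n) (Fin n) ℝ)).PosSemidef :=
    sub_smul_one_psd' hM.isHermitian (fun i => hmin i (Finset.mem_univ i))
  have hlam : lambdaMin A = μ := by
    have hμS : μ ∈ {t : ℝ | ∃ v : Fin n → ℝ, v ≠ 0 ∧ A.mulVec v = t • v} := ⟨v₀, hv₀ne, hv₀⟩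
    have hlb : ∀ t ∈ {t : ℝ | ∃ v : Fin n → ℝ, v ≠ 0 ∧ A.mulVec v = t • v}, μ ≤ t := by
      rintro t ⟨v, hvne, hMv⟩
      have h0 := hpsd.dotProduct_mulVec_nonneg v
      have hst : star v = v := by
        funext j; simp
      rw [hst, Matrix.sub_mulVec, hMv, Matrix.smul_mulVec, Matrix.one_mulVec] at h0
      have hvv : 0 < v ⬝ᵥ v := by
        rcases lt_or_eq_of_le (Finset.sum_nonneg fun j _ => mul_self_nonneg (v j)) with h | h
        · exact h
        · exact absurd (dotProduct_self_eq_zero.mp h.symm) hvne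
      have : 0 ≤ (t - μ) * (v ⬝ᵥ v) := by
        have := h0
        rw [dotProduct_sub, dotProduct_smul, dotProduct_smul] at this
        simp only [smul_eq_mul] at this ⊢
        ring_nf
        ring_nf at this
        linarith
      nlinarith
    exact le_antisymm (csInf_le ⟨μ, hlb⟩ hμS) (le_csInf ⟨μ, hμS⟩ hlb)
  exact ⟨v₀, hdot, by rw [hlam]; exact hv₀, by rw [hlam]; exact hM.eigenvalues_pos i₀, by
    rw [hlam]; exact hpsd⟩

private lemma posdef_sqrt_exists' (hB : B.PosDef) :
    ∃ R : Matrix (Fin n) (Fin n) ℝ, Rᴴ = R ∧ R * R = B ∧ IsUnit R.det := by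
  obtain ⟨a, hat, haa⟩ := psd_sqrt_decomp' hB.posSemidef
  refine ⟨a, hat, haa, ?_⟩
  have hdet : a.det * a.det = B.det := by
    rw [← Matrix.det_mul, haa]
  have hB0 : B.det ≠ 0 := hB.det_pos.ne'
  refine isUnit_iff_ne_zero.mpr fun h => hB0 ?_
  rw [← hdet, h, mul_zero]

private lemma eigenvalues_pos_of_psd_det_pos' {C : Matrix (Fin n) (Fin n) ℝ}
    (hC : C.PosSemidef) (hdet : 0 < C.det) (i : Fin n) : 0 < hC.isHermitian.eigenvalues i := by
  rcases lt_or_eq_of_le (hC.eigenvalues_nonneg i) with h | h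
  · exact h
  · exfalso
    have hd := hC.isHermitian.det_eq_prod_eigenvalues
    rw [Finset.prod_eq_zero (Finset.mem_univ i) (by rw [← h]; simp)] at hd
    rw [hd] at hdet; exact lt_irrefl _ hdet

private lemma logdet_psd_bound' {C : Matrix (Fin n) (Fin n) ℝ}
    (hC : C.PosSemidef) (hdet : 0 < C.det) :
    Real.log C.det ≤ C.trace - n := by
  have heig := eigenvalues_pos_of_psd_det_pos' hC hdet
  have hd : C.det = ∏ i, hC.isHermitian.eigenvalues i := by
    have := hC.isHermitian.det_eq_prod_eigenvalues
    simpa using this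
  have htr : C.trace = ∑ i, hC.isHermitian.eigenvalues i := by
    have := trace_smul_add_smul_one' hC.isHermitian 1 0
    simpa using this
  rw [hd, htr, Real.log_prod (fun i _ => (heig i).ne')]
  have hle : ∀ i ∈ Finset.univ, Real.log (hC.isHermitian.eigenvalues i)
      ≤ hC.isHermitian.eigenvalues i - 1 :=
    fun i _ => Real.log_le_sub_one_of_pos (heig i)
  calc ∑ i, Real.log (hC.isHermitian.eigenvalues i)
      ≤ ∑ i, (hC.isHermitian.eigenvalues i - 1) := Finset.sum_le_sum hle
    _ = (∑ i, hC.isHermitian.eigenvalues i) - n := by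
        rw [Finset.sum_sub_distrib]; simp [Finset.card_univ]

private lemma logdet_grad_ineq' (hB : B.PosDef) (hA : A.PosDef) :
    Real.log A.det ≤ Real.log B.det + (B⁻¹ * (A - B)).trace := by
  obtain ⟨R, hRt, hRR, hRu⟩ := posdef_sqrt_exists' hB
  have hRinv : R⁻¹ * R = 1 := Matrix.nonsing_inv_mul R hRu
  have hRinv' : R * R⁻¹ = 1 := Matrix.mul_nonsing_inv R hRu
  have hRinvT : (R⁻¹)ᴴ = R⁻¹ := by rw [Matrix.conjTranspose_nonsing_inv, hRt]
  have hBinv : R⁻¹ * R⁻¹ = B⁻¹ := by rw [← Matrix.mul_inv_rev, hRR]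
  set C := R⁻¹ * A * R⁻¹ with hC
  have hCpsd : C.PosSemidef := by
    have := hA.posSemidef.conjTranspose_mul_mul_same R⁻¹
    rwa [hRinvT] at this
  have hdetRR : R.det * R.det = B.det := by rw [← Matrix.det_mul, hRR]
  have hdetRinv : R⁻¹.det * R.det = 1 := by rw [← Matrix.det_mul, hRinv, Matrix.det_one]
  have hdetC : C.det * B.det = A.det := by
    rw [hC, Matrix.det_mul, Matrix.det_mul, ← hdetRR]
    linear_combination (A.det * (R⁻¹.det * R.det + 1)) * hdetRinv
  have hdetCpos : 0 < C.det := by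
    have h1 : C.det = A.det / B.det := (eq_div_iff hB.det_pos.ne').mpr hdetC
    rw [h1]
    exact div_pos hA.det_pos hB.det_pos
  have hkey := logdet_psd_bound' hCpsd hdetCpos
  have htrC : C.trace = (B⁻¹ * A).trace := by
    rw [hC, Matrix.trace_mul_cycle, hBinv]
  have htr2 : (B⁻¹ * (A - B)).trace = (B⁻¹ * A).trace - n := by
    rw [Matrix.mul_sub, Matrix.trace_sub,
      Matrix.nonsing_inv_mul B (isUnit_iff_ne_zero.mpr hB.det_pos.ne'), Matrix.trace_one]
    simp
  have hlog : Real.log A.det = Real.log C.det + Real.log B.det := by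
    rw [← hdetC, Real.log_mul hdetCpos.ne' hB.det_pos.ne']
  rw [hlog, htr2, ← htrC]
  linarith

private lemma trace_eq_sum_eigenvalues' (hA : A.IsHermitian) :
    A.trace = ∑ i, hA.eigenvalues i := by
  have := trace_smul_add_smul_one' hA 1 0
  simpa using this

private lemma det_eq_prod_eigenvalues'' (hA : A.IsHermitian) :
    A.det = ∏ i, hA.eigenvalues i := by
  have := det_smul_add_smul_one' hA 1 0
  simpa using this

private lemma det_lt_det_add_smul_one' (hA : A.PosDef) {δ : ℝ} (hδ : 0 < δ) (hn : 0 < n) :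
    A.det < (A + δ • (1 : Matrix (Fin n) (Fin n) ℝ)).det := by
  haveI : Nonempty (Fin n) := ⟨⟨0, hn⟩⟩
  have h1 : (A + δ • (1 : Matrix (Fin n) (Fin n) ℝ)).det
      = ∏ i, (hA.isHermitian.eigenvalues i + δ) := by
    have := det_smul_add_smul_one' hA.isHermitian 1 δ
    simpa using this
  rw [h1, det_eq_prod_eigenvalues'' hA.isHermitian]
  exact Finset.prod_lt_prod_of_nonempty (fun i _ => hA.eigenvalues_pos i)
    (fun i _ => by linarith) ⟨Classical.arbitrary _, Finset.mem_univ _⟩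

private lemma log_one_add_ge' {x : ℝ} (hx : |x| ≤ 1/2) : x - 2*x^2 ≤ Real.log (1+x) := by
  obtain ⟨h1, h2⟩ := abs_le.mp hx
  have hpos : (0:ℝ) < 1 + x := by linarith
  have hinv : (0:ℝ) < (1+x)⁻¹ := inv_pos.mpr hpos
  have hlog := Real.log_le_sub_one_of_pos hinv
  rw [Real.log_inv] at hlog
  have h3 : x - 2*x^2 ≤ 1 - (1+x)⁻¹ := by
    rw [sub_le_sub_iff]
    have h4 : (1+x) * (1+x)⁻¹ = 1 := mul_inv_cancel₀ hpos.ne'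
    nlinarith [sq_nonneg x, mul_pos hpos hinv]
  linarith

private lemma exists_good_eps' (hn : 0 < n) (hS : S.IsHermitian) (htr : 0 < S.trace) :
    ∃ ε : ℝ, 0 < ε ∧ ε ≤ 1 ∧ 1 < (1 + ε • S).det := by
  haveI : Nonempty (Fin n) := ⟨⟨0, hn⟩⟩
  set e := hS.eigenvalues with he
  set T := S.trace with hT
  have hTsum : T = ∑ i, e i := trace_eq_sum_eigenvalues' hS
  set Q : ℝ := ∑ i, (e i)^2 with hQ
  have hQ0 : 0 ≤ Q := Finset.sum_nonneg fun i _ => sq_nonneg _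
  have hQ1 : (0:ℝ) < 1 + Q := by linarith
  have hebound : ∀ i, |e i| ≤ 1 + Q := by
    intro i
    have h1 : (e i)^2 ≤ Q := Finset.single_le_sum (fun j _ => sq_nonneg (e j)) (Finset.mem_univ i)
    rcases le_or_gt (|e i|) 1 with h | h
    · linarith
    · have : |e i| ≤ (e i)^2 := by nlinarith [abs_nonneg (e i), sq_abs (e i)]
      linarith
  set ε : ℝ := min (min 1 (T / (8 * (1+Q)^2))) (1 / (2*(1+Q))) with hε
  have hε0 : 0 < ε := by
    apply lt_min (lt_min one_pos _) _
    · positivity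
    · positivity
  have hε1 : ε ≤ 1 := le_trans (min_le_left _ _) (min_le_left _ _)
  have hεT : ε ≤ T / (8 * (1+Q)^2) := le_trans (min_le_left _ _) (min_le_right _ _)
  have hεQ : ε ≤ 1 / (2*(1+Q)) := min_le_right _ _
  have hsmall : ∀ i, |ε * e i| ≤ 1/2 := by
    intro i
    rw [abs_mul, abs_of_pos hε0]
    calc ε * |e i| ≤ (1 / (2*(1+Q))) * (1+Q) :=
          mul_le_mul hεQ (hebound i) (abs_nonneg _) (by positivity)
      _ = 1/2 := by field_simp
  have hdet : (1 + ε • S).det = ∏ i, (1 + ε * e i) := by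
    have := det_smul_add_smul_one' hS ε 1
    rw [add_comm] at this
    simp only [one_smul] at this
    rw [this]
    exact Finset.prod_congr rfl fun i _ => by ring
  have hterm_pos : ∀ i, (0:ℝ) < 1 + ε * e i := by
    intro i
    have := abs_le.mp (hsmall i)
    linarith [this.1]
  have hlogsum : 0 < Real.log ((1 + ε • S).det) := by
    rw [hdet, Real.log_prod (fun i _ => (hterm_pos i).ne')]
    have hstep : ∀ i ∈ Finset.univ, ε * e i - 2*(ε * e i)^2 ≤ Real.log (1 + ε * e i) :=
      fun i _ => log_one_add_ge' (hsmall i)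
    have hsum1 : ∑ i, (ε * e i - 2*(ε * e i)^2) ≤ ∑ i, Real.log (1 + ε * e i) :=
      Finset.sum_le_sum hstep
    have hsum2 : ∑ i, (ε * e i - 2*(ε * e i)^2) = ε * T - 2 * ε^2 * Q := by
      rw [hTsum, hQ, Finset.mul_sum, Finset.mul_sum, ← Finset.sum_sub_distrib]
      exact Finset.sum_congr rfl fun i _ => by ring
    have hfinal : 0 < ε * T - 2 * ε^2 * Q := by
      have h1 : 2 * ε^2 * Q ≤ 2 * ε * (T / (8 * (1+Q)^2)) * Q := by
        have : ε * ε ≤ ε * (T / (8 * (1+Q)^2)) :=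
          mul_le_mul_of_nonneg_left hεT hε0.le
        nlinarith [hQ0]
      have h2 : 2 * ε * (T / (8 * (1+Q)^2)) * Q ≤ ε * T / 4 := by
        have hQle : Q ≤ (1+Q)^2 := by nlinarith
        have hc : (0:ℝ) ≤ 2 * ε * T / (8 * (1+Q)^2) := by positivity
        have hmul := mul_le_mul_of_nonneg_left hQle hc
        calc 2 * ε * (T / (8 * (1+Q)^2)) * Q = (2 * ε * T / (8 * (1+Q)^2)) * Q := by ring
          _ ≤ (2 * ε * T / (8 * (1+Q)^2)) * (1+Q)^2 := hmul
          _ = ε * T / 4 := by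
              field_simp
              ring
      nlinarith
    linarith
  refine ⟨ε, hε0, hε1, ?_⟩
  by_contra h
  push_neg at h
  have hdpos : 0 < (1 + ε • S).det := by
    rw [hdet]; exact Finset.prod_pos fun i _ => hterm_pos i
  have := Real.log_nonpos (by linarith) h
  linarith

private lemma trace_mul_outer' (M : Matrix (Fin n) (Fin n) ℝ) (u : Fin n → ℝ) :
    (M * Matrix.of (fun i j => u i * u j)).trace = (M *ᵥ u) ⬝ᵥ u := by
  rw [Matrix.trace, dotProduct]
  refine Finset.sum_congr rfl fun i _ => ?_
  simp only [Matrix.diag_apply, Matrix.mul_apply, Matrix.of_apply, Matrix.mulVec,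
    dotProduct, Finset.sum_mul]
  exact Finset.sum_congr rfl fun k _ => by ring

private lemma outer_psd' (u : Fin n → ℝ) :
    (Matrix.of (fun i j => u i * u j) : Matrix (Fin n) (Fin n) ℝ).PosSemidef := by
  refine Matrix.PosSemidef.of_dotProduct_mulVec_nonneg ?_ ?_
  · ext i j
    simp [Matrix.conjTranspose_apply, mul_comm]
  · intro x
    have hx : star x = x := by funext j; simp
    have : (star x) ⬝ᵥ ((Matrix.of (fun i j => u i * u j) : Matrix (Fin n) (Fin n) ℝ) *ᵥ x)
        = (∑ i, u i * x i) * (∑ j, u j * x j) := by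
      rw [hx, dotProduct, Finset.sum_mul]
      refine Finset.sum_congr rfl fun i _ => ?_
      simp only [Matrix.mulVec, dotProduct, Matrix.of_apply, Finset.mul_sum,
        Finset.sum_mul]
      exact Finset.sum_congr rfl fun k _ => by ring
    rw [this]
    exact mul_self_nonneg _

private lemma outer_trace' (u : Fin n → ℝ) :
    (Matrix.of (fun i j => u i * u j) : Matrix (Fin n) (Fin n) ℝ).trace = u ⬝ᵥ u := by
  rw [Matrix.trace, dotProduct]
  exact Finset.sum_congr rfl fun i _ => rfl

end helpers

/-- Water-filling characterization of the optimal input covariance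
for the `n`-block nonfeedback Gaussian capacity: `K_X` maximizes
`log det(K' + K_Z)` over psd `K'` with `tr K' ≤ nP` iff `tr K_X = nP` and
`tr(K_X (K_Y - λ_min(K_Y) I)) = 0` where `K_Y = K_X + K_Z`. -/
theorem stmt11 (n : ℕ) (K_Z K_X : Matrix (Fin n) (Fin n) ℝ) (P : ℝ) (hP : 0 < P)
    (hKZ : K_Z.PosDef) (hKX : K_X.PosSemidef) (htr : K_X.trace ≤ (n : ℝ) * P) :
    (∀ K' : Matrix (Fin n) (Fin n) ℝ, K'.PosSemidef → K'.trace ≤ (n : ℝ) * P →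
        Real.log (K' + K_Z).det ≤ Real.log (K_X + K_Z).det) ↔
      (K_X.trace = (n : ℝ) * P ∧
        (K_X * ((K_X + K_Z) -
          lambdaMin (K_X + K_Z) • (1 : Matrix (Fin n) (Fin n) ℝ))).trace = 0) := by
  rcases Nat.eq_zero_or_pos n with hn | hn
  · subst hn
    constructor
    · intro _
      refine ⟨?_, ?_⟩
      · simp [Matrix.trace]
      · simp [Matrix.trace]
    · intro _ K' _ _
      rw [Matrix.det_fin_zero, Matrix.det_fin_zero]
  · have hKY : (K_X + K_Z).PosDef := Matrix.PosDef.posSemidef_add hKX hKZ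
    obtain ⟨u, hu1, huE, hl0, hMpsd⟩ := lambdaMin_spec' hKY hn
    set lam := lambdaMin (K_X + K_Z) with hlamdef
    have hdetKY : IsUnit (K_X + K_Z).det := isUnit_iff_ne_zero.mpr hKY.det_pos.ne'
    obtain ⟨R, hRt, hRR, hRu⟩ := posdef_sqrt_exists' hKY
    have hRinv : R⁻¹ * R = 1 := Matrix.nonsing_inv_mul R hRu
    have hRinv' : R * R⁻¹ = 1 := Matrix.mul_nonsing_inv R hRu
    have hRinvT : (R⁻¹)ᴴ = R⁻¹ := by rw [Matrix.conjTranspose_nonsing_inv, hRt]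
    have hBinv : R⁻¹ * R⁻¹ = (K_X + K_Z)⁻¹ := by rw [← Matrix.mul_inv_rev, hRR]
    -- psd of N = lam⁻¹ • 1 - (K_X+K_Z)⁻¹
    have hNpsd : (lam⁻¹ • (1 : Matrix (Fin n) (Fin n) ℝ) - (K_X + K_Z)⁻¹).PosSemidef := by
      have hconj : R⁻¹ * ((K_X + K_Z) - lam • (1 : Matrix (Fin n) (Fin n) ℝ)) * R⁻¹
          = 1 - lam • (K_X + K_Z)⁻¹ := by
        rw [Matrix.mul_sub, Matrix.sub_mul]
        congr 1
        · rw [← hRR, show R⁻¹ * (R * R) * R⁻¹ = (R⁻¹ * R) * (R * R⁻¹) from by noncomm_ring,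
            hRinv, hRinv', Matrix.one_mul]
        · rw [Matrix.mul_smul, Matrix.smul_mul, Matrix.mul_one, hBinv]
      have hpsd1 : (1 - lam • (K_X + K_Z)⁻¹).PosSemidef := by
        rw [← hconj]
        have := hMpsd.conjTranspose_mul_mul_same R⁻¹
        rwa [hRinvT] at this
      have := psd_smul' (c := lam⁻¹) (by positivity) hpsd1
      rwa [smul_sub, smul_smul, inv_mul_cancel₀ hl0.ne', one_smul] at this
    have hKYinvu : (K_X + K_Z)⁻¹ *ᵥ u = lam⁻¹ • u := by
      have h1 : (K_X + K_Z)⁻¹ *ᵥ ((K_X + K_Z) *ᵥ u) = u := by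
        rw [Matrix.mulVec_mulVec, Matrix.nonsing_inv_mul _ hdetKY, Matrix.one_mulVec]
      rw [huE, Matrix.mulVec_smul] at h1
      calc (K_X + K_Z)⁻¹ *ᵥ u = lam⁻¹ • (lam • ((K_X + K_Z)⁻¹ *ᵥ u)) := by
            rw [smul_smul, inv_mul_cancel₀ hl0.ne', one_smul]
        _ = lam⁻¹ • u := by rw [h1]
    have htrW : ((K_X + K_Z)⁻¹ * Matrix.of (fun i j => u i * u j)).trace = lam⁻¹ := by
      rw [trace_mul_outer', hKYinvu, smul_dotProduct, hu1, smul_eq_mul, mul_one]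
    constructor
    · intro h
      -- (i)
      have hi : K_X.trace = (n : ℝ) * P := by
        by_contra hne
        have hlt : K_X.trace < (n : ℝ) * P := lt_of_le_of_ne htr hne
        set δ : ℝ := ((n : ℝ) * P - K_X.trace) / n with hδdef
        have hδ : 0 < δ := by
          apply div_pos (by linarith) (by exact_mod_cast hn)
        set K' : Matrix (Fin n) (Fin n) ℝ := K_X + δ • 1 with hK'def
        have hK'psd : K'.PosSemidef := hKX.add (psd_smul' hδ.le Matrix.PosSemidef.one)
        have hK'tr : K'.trace = (n : ℝ) * P := by
          rw [hK'def, Matrix.trace_add, Matrix.trace_smul, Matrix.trace_one]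
          have hn0 : (n : ℝ) ≠ 0 := by exact_mod_cast hn.ne'
          rw [Fintype.card_fin, smul_eq_mul, hδdef, div_mul_cancel₀ _ hn0]
          ring
        have hdetlt : (K_X + K_Z).det < (K' + K_Z).det := by
          have heq : K' + K_Z = (K_X + K_Z) + δ • 1 := by
            rw [hK'def]; abel
          rw [heq]
          exact det_lt_det_add_smul_one' hKY hδ hn
        have := h K' hK'psd hK'tr.le
        have := Real.log_lt_log hKY.det_pos hdetlt
        linarith
      refine ⟨hi, ?_⟩
      -- (ii)
      have hge : 0 ≤ (K_X * ((K_X + K_Z) - lam • (1 : Matrix (Fin n) (Fin n) ℝ))).trace :=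
        psd_trace_mul_nonneg' hKX hMpsd
      by_contra hne2
      have hgt : 0 < (K_X * ((K_X + K_Z) - lam • (1 : Matrix (Fin n) (Fin n) ℝ))).trace :=
        lt_of_le_of_ne hge (Ne.symm hne2)
      have hc0 : 0 ≤ (K_X * (lam⁻¹ • (1 : Matrix (Fin n) (Fin n) ℝ) - (K_X + K_Z)⁻¹)).trace :=
        psd_trace_mul_nonneg' hKX hNpsd
      have hcpos : 0 < (K_X * (lam⁻¹ • (1 : Matrix (Fin n) (Fin n) ℝ) - (K_X + K_Z)⁻¹)).trace := by
        rcases lt_or_eq_of_le hc0 with hlt | heq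
        · exact hlt
        · exfalso
          have hzero : K_X * (lam⁻¹ • (1 : Matrix (Fin n) (Fin n) ℝ) - (K_X + K_Z)⁻¹) = 0 :=
            psd_mul_eq_zero_of_trace' hKX hNpsd heq.symm
          rw [Matrix.mul_sub, Matrix.mul_smul, Matrix.mul_one, sub_eq_zero] at hzero
          -- hzero : lam⁻¹ • K_X = K_X * (K_X+K_Z)⁻¹
          have happ : (lam⁻¹ • K_X) * (K_X + K_Z) = K_X * (K_X + K_Z)⁻¹ * (K_X + K_Z) := by
            rw [hzero]
          rw [Matrix.nonsing_inv_mul_cancel_right _ _ hdetKY, Matrix.smul_mul] at happ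
          -- happ : lam⁻¹ • (K_X * (K_X+K_Z)) = K_X
          have hXY : K_X * (K_X + K_Z) = lam • K_X := by
            calc K_X * (K_X + K_Z) = lam • (lam⁻¹ • (K_X * (K_X + K_Z))) := by
                  rw [smul_smul, mul_inv_cancel₀ hl0.ne', one_smul]
              _ = lam • K_X := by rw [happ]
          have : K_X * ((K_X + K_Z) - lam • (1 : Matrix (Fin n) (Fin n) ℝ)) = 0 := by
            rw [Matrix.mul_sub, Matrix.mul_smul, Matrix.mul_one, hXY, sub_self]
          rw [this] at hgt
          simp at hgt
      -- perturbation setup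
      set W : Matrix (Fin n) (Fin n) ℝ := Matrix.of (fun i j => u i * u j) with hWdef
      set Δ : Matrix (Fin n) (Fin n) ℝ := ((n : ℝ) * P) • W - K_X with hΔdef
      set S : Matrix (Fin n) (Fin n) ℝ := R⁻¹ * Δ * R⁻¹ with hSdef
      have hWH : Wᴴ = W := (outer_psd' u).isHermitian.eq
      have hΔH : Δᴴ = Δ := by
        rw [hΔdef, Matrix.conjTranspose_sub, Matrix.conjTranspose_smul, hWH,
          hKX.isHermitian.eq, star_trivial]
      have hSH : S.IsHermitian := by
        show Sᴴ = S
        rw [hSdef, Matrix.conjTranspose_mul, Matrix.conjTranspose_mul, hRinvT, hΔH,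
          Matrix.mul_assoc]
      have htrS : S.trace
          = (K_X * (lam⁻¹ • (1 : Matrix (Fin n) (Fin n) ℝ) - (K_X + K_Z)⁻¹)).trace := by
        have h1 : S.trace = ((K_X + K_Z)⁻¹ * Δ).trace := by
          rw [hSdef, Matrix.trace_mul_cycle, hBinv]
        have h2 : ((K_X + K_Z)⁻¹ * Δ).trace
            = ((n : ℝ) * P) * lam⁻¹ - ((K_X + K_Z)⁻¹ * K_X).trace := by
          rw [hΔdef, Matrix.mul_sub, Matrix.trace_sub, Matrix.mul_smul, Matrix.trace_smul,
            htrW, smul_eq_mul]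
        have h3 : (K_X * (lam⁻¹ • (1 : Matrix (Fin n) (Fin n) ℝ) - (K_X + K_Z)⁻¹)).trace
            = lam⁻¹ * K_X.trace - (K_X * (K_X + K_Z)⁻¹).trace := by
          rw [Matrix.mul_sub, Matrix.trace_sub, Matrix.mul_smul, Matrix.mul_one,
            Matrix.trace_smul, smul_eq_mul]
        rw [h1, h2, h3, hi, Matrix.trace_mul_comm]
        ring
      have htrSpos : 0 < S.trace := by rw [htrS]; exact hcpos
      obtain ⟨ε, hε0, hε1, hεdet⟩ := exists_good_eps' hn hSH htrSpos
      set K' : Matrix (Fin n) (Fin n) ℝ := (1 - ε) • K_X + (ε * ((n : ℝ) * P)) • W with hK'def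
      have hWpsd : W.PosSemidef := outer_psd' u
      have hnP : 0 ≤ (n : ℝ) * P := by positivity
      have hK'psd : K'.PosSemidef :=
        (psd_smul' (by linarith) hKX).add (psd_smul' (by positivity) hWpsd)
      have hWtr : W.trace = 1 := by rw [hWdef, outer_trace', hu1]
      have hK'tr : K'.trace = (n : ℝ) * P := by
        rw [hK'def, Matrix.trace_add, Matrix.trace_smul, Matrix.trace_smul, hWtr, hi,
          smul_eq_mul, smul_eq_mul]
        ring
      have hsum : K' + K_Z = (K_X + K_Z) + ε • Δ := by
        rw [hK'def, hΔdef, sub_smul, one_smul, smul_sub, smul_smul]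
        abel
      have hRSR : R * S * R = Δ := by
        rw [hSdef, show R * (R⁻¹ * Δ * R⁻¹) * R = (R * R⁻¹) * Δ * (R⁻¹ * R) from by
          noncomm_ring, hRinv', hRinv, Matrix.one_mul, Matrix.mul_one]
      have hfact : (K_X + K_Z) + ε • Δ = R * (1 + ε • S) * R := by
        have hexp : R * (1 + ε • S) * R = R * R + ε • (R * S * R) := by
          rw [Matrix.mul_add, Matrix.add_mul, Matrix.mul_one, Matrix.mul_smul, Matrix.smul_mul]
        rw [hexp, hRR, hRSR]
      have hdetRR : R.det * R.det = (K_X + K_Z).det := by rw [← Matrix.det_mul, hRR]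
      have hdetprod : (K' + K_Z).det = (K_X + K_Z).det * (1 + ε • S).det := by
        rw [hsum, hfact, Matrix.det_mul, Matrix.det_mul]
        linear_combination ((1 + ε • S).det) * hdetRR
      have hltdet : (K_X + K_Z).det < (K' + K_Z).det := by
        rw [hdetprod]
        exact (lt_mul_iff_one_lt_right hKY.det_pos).mpr hεdet
      have hc1 := h K' hK'psd hK'tr.le
      have hc2 := Real.log_lt_log hKY.det_pos hltdet
      linarith
    · rintro ⟨hi, hii⟩ K' hK' htrK'
      have hKXN : K_X * ((K_X + K_Z) - lam • (1 : Matrix (Fin n) (Fin n) ℝ)) = 0 :=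
        psd_mul_eq_zero_of_trace' hKX hMpsd hii
      rw [Matrix.mul_sub, Matrix.mul_smul, Matrix.mul_one, sub_eq_zero] at hKXN
      -- hKXN : K_X * (K_X + K_Z) = lam • K_X
      have htrKXinv : (K_X * (K_X + K_Z)⁻¹).trace = lam⁻¹ * ((n : ℝ) * P) := by
        have h2 : K_X * (K_X + K_Z) * (K_X + K_Z)⁻¹ = K_X :=
          Matrix.mul_nonsing_inv_cancel_right _ _ hdetKY
        rw [hKXN, Matrix.smul_mul] at h2
        have h3 := congrArg Matrix.trace h2
        rw [Matrix.trace_smul, smul_eq_mul] at h3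
        rw [hi] at h3
        calc (K_X * (K_X + K_Z)⁻¹).trace
            = lam⁻¹ * (lam * (K_X * (K_X + K_Z)⁻¹).trace) := by
              rw [← mul_assoc, inv_mul_cancel₀ hl0.ne', one_mul]
          _ = lam⁻¹ * ((n : ℝ) * P) := by rw [h3]
      have hA' : (K' + K_Z).PosDef := Matrix.PosDef.posSemidef_add hK' hKZ
      have key := logdet_grad_ineq' hKY hA'
      have hsub : K' + K_Z - (K_X + K_Z) = K' - K_X := by abel
      have hexp : ((K_X + K_Z)⁻¹ * (K' + K_Z - (K_X + K_Z))).trace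
          = ((K_X + K_Z)⁻¹ * K').trace - ((K_X + K_Z)⁻¹ * K_X).trace := by
        rw [hsub, Matrix.mul_sub, Matrix.trace_sub]
      have h3 : 0 ≤ (K' * (lam⁻¹ • (1 : Matrix (Fin n) (Fin n) ℝ) - (K_X + K_Z)⁻¹)).trace :=
        psd_trace_mul_nonneg' hK' hNpsd
      have h4 : (K' * (lam⁻¹ • (1 : Matrix (Fin n) (Fin n) ℝ) - (K_X + K_Z)⁻¹)).trace
          = lam⁻¹ * K'.trace - (K' * (K_X + K_Z)⁻¹).trace := by
        rw [Matrix.mul_sub, Matrix.trace_sub, Matrix.mul_smul, Matrix.mul_one,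
          Matrix.trace_smul, smul_eq_mul]
      have h5 : (K' * (K_X + K_Z)⁻¹).trace ≤ lam⁻¹ * ((n : ℝ) * P) := by
        have h6 : lam⁻¹ * K'.trace ≤ lam⁻¹ * ((n : ℝ) * P) :=
          mul_le_mul_of_nonneg_left htrK' (inv_nonneg.mpr hl0.le)
        linarith [h3, h4.symm.le]
      have h7 : ((K_X + K_Z)⁻¹ * K').trace = (K' * (K_X + K_Z)⁻¹).trace :=
        Matrix.trace_mul_comm _ _
      have h8 : ((K_X + K_Z)⁻¹ * K_X).trace = lam⁻¹ * ((n : ℝ) * P) := by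
        rw [Matrix.trace_mul_comm]; exact htrKXinv
      rw [hexp, h7, h8] at key
      linarith
end
end

section
/- Let F ∈ ℝ^{k×k} be invertible and H ∈ ℝ^{1×k}. Suppose the symmetric matrix Σ ∈ ℝ^{k×k} satisfies 1 + HΣHᵀ ≠ 0 and solves the discrete algebraic Riccati equation Σ = FΣFᵀ - (FΣHᵀ)(FΣHᵀ)ᵀ/(1+HΣHᵀ). Let Γ = FΣHᵀ/(1+HΣHᵀ) ∈ ℝ^{k×1}. Then F - ΓH is invertible and 1 + HΣHᵀ = det(F)/det(F - ΓH). -/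
open MeasureTheory Real Filter Matrix

noncomputable section

/-- For an invertible `F` and a symmetric solution `Σ` of the
discrete algebraic Riccati equation
`Σ = FΣFᵀ - (FΣHᵀ)(FΣHᵀ)ᵀ/(1+HΣHᵀ)` with `1 + HΣHᵀ ≠ 0`, the matrix `F - ΓH`
with `Γ = FΣHᵀ/(1+HΣHᵀ)` is invertible and `1 + HΣHᵀ = det F / det(F - ΓH)`. -/
theorem stmt18 (k : ℕ) (F : Matrix (Fin k) (Fin k) ℝ) (H : Fin k → ℝ)
    (S : Matrix (Fin k) (Fin k) ℝ)
    (hF : F.det ≠ 0) (hS : S.IsSymm)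
    (hβ : 1 + H ⬝ᵥ S.mulVec H ≠ 0)
    (hric : S = F * S * Fᵀ - (1 + H ⬝ᵥ S.mulVec H)⁻¹ •
      Matrix.vecMulVec (F.mulVec (S.mulVec H)) (F.mulVec (S.mulVec H)))
    (Γ : Fin k → ℝ)
    (hΓ : Γ = (1 + H ⬝ᵥ S.mulVec H)⁻¹ • F.mulVec (S.mulVec H)) :
    (F - Matrix.vecMulVec Γ H).det ≠ 0 ∧
      1 + H ⬝ᵥ S.mulVec H = F.det / (F - Matrix.vecMulVec Γ H).det := by
  set c : ℝ := 1 + H ⬝ᵥ S.mulVec H with hc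
  have hinv : F⁻¹.mulVec Γ = c⁻¹ • S.mulVec H := by
    rw [hΓ, mulVec_smul, Matrix.mulVec_mulVec,
      Matrix.nonsing_inv_mul F (isUnit_iff_ne_zero.mpr hF), Matrix.one_mulVec]
  have key : (F - Matrix.vecMulVec Γ H).det = F.det * c⁻¹ := by
    have h1 : F - Matrix.vecMulVec Γ H
        = F + Matrix.replicateCol Unit (-Γ) * Matrix.replicateRow Unit H := by
      rw [← Matrix.vecMulVec_eq Unit]
      ext i j
      simp [Matrix.vecMulVec_apply, sub_eq_add_neg]
    have h2 : (1 + Matrix.replicateRow Unit H * F⁻¹ * Matrix.replicateCol Unit (-Γ)).det = c⁻¹ := by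
      rw [Matrix.det_unique, Matrix.add_apply, Matrix.one_apply_eq,
        ← Matrix.replicateRow_vecMul, Matrix.replicateRow_mul_replicateCol_apply, ← dotProduct_mulVec,
        Matrix.mulVec_neg, hinv]
      simp only [dotProduct_neg, dotProduct_smul, smul_eq_mul]
      field_simp
      ring
    rw [h1, Matrix.det_add_replicateCol_mul_replicateRow (isUnit_iff_ne_zero.mpr hF), h2]
  have hdet : (F - Matrix.vecMulVec Γ H).det ≠ 0 := by
    rw [key]; exact mul_ne_zero hF (inv_ne_zero hβ)
  refine ⟨hdet, ?_⟩
  rw [key]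
  field_simp
end
end
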